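/- arXiv:2604.26286 — 3 statements merged into one kernel-verified Lean document; each statement's English description precedes it below -/
import Mathlib

section
/- For every real β > 1 and every t in the interval [(β-1)/(β+1), 1], one has t^β (1-t) ≥ e^{-1} (1-t) ((β+1) t - (β-1)). -/
theorem stmt_0 (β t : ℝ) (hβ : 1 < β)
    (ht : t ∈ Set.Icc ((β - 1) / (β + 1)) 1) :
    t ^ β * (1 - t) ≥ Real.exp (-1) * (1 - t) * ((β + 1) * t - (β - 1)) := by
  obtain ⟨ht1, ht2⟩ := ht
  have hβ0 : (0:ℝ) < β := by linarith
  have hβ1 : (0:ℝ) < β + 1 := by linarith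
  have ht0 : 0 ≤ t := le_trans (div_nonneg (by linarith) (by linarith)) ht1
  have hw : 0 ≤ (β + 1) * t - (β - 1) := by
    rw [div_le_iff₀ hβ1] at ht1; linarith
  -- key pointwise bound : t ^ β ≥ exp (-1) * ((β+1)*t - (β-1))
  have key : Real.exp (-1) * ((β + 1) * t - (β - 1)) ≤ t ^ β := by
    set s : ℝ := ((β + 1) * t - β) / β with hs_def
    have hs : -1 ≤ s := by
      rw [hs_def, le_div_iff₀ hβ0]; nlinarith
    have hfact : t = β / (β + 1) * (1 + s) := by
      rw [hs_def]; field_simp; ring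
    have hA : Real.exp (-1) ≤ (β / (β + 1)) ^ β := by
      have h1 : Real.exp (1 / β) ^ β = Real.exp 1 := by
        rw [← Real.exp_mul, one_div_mul_cancel hβ0.ne']
      have h2 : (β + 1) / β ≤ Real.exp (1 / β) := by
        have := Real.add_one_le_exp (1 / β)
        have : 1 + 1 / β ≤ Real.exp (1 / β) := by linarith
        calc (β + 1) / β = 1 + 1 / β := by field_simp
          _ ≤ Real.exp (1 / β) := this
      have h3 : ((β + 1) / β) ^ β ≤ Real.exp 1 := by
        rw [← h1]
        exact Real.rpow_le_rpow (by positivity) h2 hβ0.le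
      have h4 : (β / (β + 1)) ^ β = (((β + 1) / β) ^ β)⁻¹ := by
        rw [← Real.inv_rpow (by positivity), inv_div]
      rw [h4, Real.exp_neg]
      exact inv_anti₀ (by positivity) h3
    have hB : (β + 1) * t - (β - 1) ≤ (1 + s) ^ β := by
      have := one_add_mul_self_le_rpow_one_add hs hβ.le
      have hbs : 1 + β * s = (β + 1) * t - (β - 1) := by
        rw [hs_def]; field_simp; ring
      linarith
    have h1s : 0 ≤ 1 + s := by linarith
    calc Real.exp (-1) * ((β + 1) * t - (β - 1))
        ≤ (β / (β + 1)) ^ β * (1 + s) ^ β := by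
          apply mul_le_mul hA hB hw (by positivity)
      _ = t ^ β := by
          rw [← Real.mul_rpow (by positivity) h1s, ← hfact]
  have h1t : 0 ≤ 1 - t := by linarith
  calc Real.exp (-1) * (1 - t) * ((β + 1) * t - (β - 1))
      = Real.exp (-1) * ((β + 1) * t - (β - 1)) * (1 - t) := by ring
    _ ≤ t ^ β * (1 - t) := mul_le_mul_of_nonneg_right key h1t
end

section
/- Define G(t) = t - (2/e)(e^{-2t}(t+1) + t - 1). Then for all t ∈ (0,1), e^{G(t)} + G(t)(t+1) < 2(t+1). -/
noncomputable def G (t : ℝ) : ℝ :=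
  t - (2 / Real.exp 1) * (Real.exp (-2 * t) * (t + 1) + t - 1)

private lemma exp_upper4 {x : ℝ} (h0 : 0 ≤ x) (h1 : x ≤ 1) :
    Real.exp x ≤ 1 + x + x ^ 2 / 2 + x ^ 3 / 6 + 5 / 96 * x ^ 4 := by
  have h := Real.exp_bound' h0 h1 (n := 4) (by norm_num)
  have hs : (∑ m ∈ Finset.range 4, x ^ m / m.factorial) = 1 + x + x ^ 2 / 2 + x ^ 3 / 6 := by
    simp [Finset.sum_range_succ, Nat.factorial]
  rw [hs] at h
  have : x ^ 4 * (4 + 1) / ((Nat.factorial 4 : ℝ) * 4) = 5 / 96 * x ^ 4 := by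
    norm_num [Nat.factorial]
    ring
  nlinarith [h, this]

private lemma exp_neg_lower4 {x : ℝ} (h0 : 0 ≤ x) (h1 : x ≤ 1) :
    1 - x + x ^ 2 / 2 - x ^ 3 / 6 - 5 / 96 * x ^ 4 ≤ Real.exp (-x) := by
  have habs : |(-x)| ≤ 1 := by rw [abs_neg, abs_of_nonneg h0]; exact h1
  have h := Real.exp_bound habs (n := 4) (by norm_num)
  have hs : (∑ m ∈ Finset.range 4, (-x) ^ m / m.factorial)
      = 1 - x + x ^ 2 / 2 - x ^ 3 / 6 := by
    simp [Finset.sum_range_succ, Nat.factorial]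
    ring
  rw [hs, abs_neg, abs_of_nonneg h0] at h
  have h2 := (abs_sub_le_iff.1 h).2
  norm_num [Nat.factorial] at h2
  linarith [h2]

set_option maxHeartbeats 2000000 in
theorem stmt_4 (t : ℝ) (ht : t ∈ Set.Ioo (0 : ℝ) 1) :
    Real.exp (G t) + G t * (t + 1) < 2 * (t + 1) := by
  obtain ⟨ht0, ht1⟩ := ht
  have hE0 : (0 : ℝ) < Real.exp 1 := Real.exp_pos 1
  have hEu : Real.exp 1 < 2.7182818286 := Real.exp_one_lt_d9
  -- lower bound for exp(-2t) via squared Taylor bound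
  have hMnn : (0 : ℝ) ≤ 1 - t + t ^ 2 / 2 - t ^ 3 / 6 - 5 / 96 * t ^ 4 := by
    nlinarith [mul_nonneg (sq_nonneg t) (by linarith : (0:ℝ) ≤ 1 - t),
      mul_nonneg (mul_nonneg (sq_nonneg t) ht0.le) (by linarith : (0:ℝ) ≤ 1 - t),
      sq_nonneg (1 - t), sq_nonneg t]
  have hMle : 1 - t + t ^ 2 / 2 - t ^ 3 / 6 - 5 / 96 * t ^ 4 ≤ Real.exp (-t) :=
    exp_neg_lower4 ht0.le ht1.le
  have hsq : (1 - t + t ^ 2 / 2 - t ^ 3 / 6 - 5 / 96 * t ^ 4) ^ 2 ≤ Real.exp (-2 * t) := by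
    have : Real.exp (-2 * t) = Real.exp (-t) * Real.exp (-t) := by
      rw [← Real.exp_add]; ring_nf
    rw [this, sq]
    exact mul_le_mul hMle hMle hMnn (Real.exp_pos _).le
  -- h(t) ≥ 0, hence G t ≤ t
  have hh0 : 0 ≤ Real.exp (-2 * t) * (t + 1) + t - 1 := by
    have key : (1 - t + t ^ 2 / 2 - t ^ 3 / 6 - 5 / 96 * t ^ 4) ^ 2 * (t + 1) + t - 1
        = t ^ 3 * (2/3 - 41/48 * t + 5/12 * t ^ 2 - 25/288 * t ^ 3 - 1/144 * t ^ 4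
            + 185/9216 * t ^ 5 + 25/9216 * t ^ 6) := by ring
    have hR : 0 ≤ 2/3 - 41/48 * t + 5/12 * t ^ 2 - 25/288 * t ^ 3 - 1/144 * t ^ 4
        + 185/9216 * t ^ 5 + 25/9216 * t ^ 6 := by nlinarith [sq_nonneg t, sq_nonneg (1 - t), sq_nonneg (t - t^2), pow_nonneg ht0.le 3, pow_nonneg ht0.le 5, pow_nonneg ht0.le 6]
    nlinarith [hsq, pow_nonneg ht0.le 3, mul_nonneg (pow_nonneg ht0.le 3) hR]
  have hGt : G t ≤ t := by
    unfold G
    have h1 : (0 : ℝ) ≤ 2 / Real.exp 1 := by positivity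
    nlinarith [mul_nonneg h1 hh0]
  rcases le_or_gt t (3/4) with hc | hc
  · -- region 1 : 0 < t ≤ 3/4
    have he : Real.exp (G t) ≤ Real.exp t := Real.exp_le_exp.mpr hGt
    have hu := exp_upper4 ht0.le ht1.le
    have hmul : G t * (t + 1) ≤ t * (t + 1) :=
      mul_le_mul_of_nonneg_right hGt (by linarith)
    have h2 : t ^ 2 ≤ 9/16 := by nlinarith
    have h3 : t ^ 3 ≤ 27/64 := by nlinarith
    have h4 : t ^ 4 ≤ 81/256 := by nlinarith
    linarith [he, hu, hmul]
  · -- region 2 : 3/4 < t < 1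
    set Hc : ℝ := 1353/10000 * ((3 - 2*t) * (t + 1)) + t - 1 with hHcdef
    have hHc0 : (0 : ℝ) ≤ Hc := by rw [hHcdef]; nlinarith
    -- tangent line bound : exp(-2t) ≥ (3-2t) * exp(-2) ≥ 0.1353 * (3-2t)
    have htan : (3 - 2*t) ≤ Real.exp 2 * Real.exp (-2 * t) := by
      have := Real.add_one_le_exp (2 - 2*t)
      have : 3 - 2*t ≤ Real.exp (2 - 2*t) := by linarith
      calc (3 - 2*t) ≤ Real.exp (2 - 2*t) := this
        _ = Real.exp 2 * Real.exp (-2 * t) := by rw [← Real.exp_add]; ring_nf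
    have hc2 : (1353/10000 : ℝ) * Real.exp 2 ≤ 1 := by
      have h2 : Real.exp 2 = Real.exp 1 * Real.exp 1 := by
        rw [← Real.exp_add]; norm_num
      rw [h2]; nlinarith [hE0.le, hEu]
    have hct : (1353/10000 : ℝ) * (3 - 2*t) ≤ Real.exp (-2 * t) := by
      have h3 : (0 : ℝ) ≤ 3 - 2*t := by linarith
      have hepos := (Real.exp_pos (-2 * t)).le
      nlinarith [mul_le_mul_of_nonneg_right hc2 hepos, htan]
    have hhHc : Hc ≤ Real.exp (-2 * t) * (t + 1) + t - 1 := by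
      rw [hHcdef]
      have ht1' : (0 : ℝ) ≤ t + 1 := by linarith
      nlinarith [mul_le_mul_of_nonneg_right hct ht1']
    have ha : (7356/10000 : ℝ) ≤ 2 / Real.exp 1 := by
      rw [le_div_iff₀ hE0]; nlinarith [hEu]
    have hGQ : G t ≤ t - 7356/10000 * Hc := by
      unfold G
      have h1 : 7356/10000 * Hc ≤ (2 / Real.exp 1) * Hc :=
        mul_le_mul_of_nonneg_right ha hHc0
      have h2 : (2 / Real.exp 1) * Hc ≤ (2 / Real.exp 1) * (Real.exp (-2 * t) * (t + 1) + t - 1) :=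
        mul_le_mul_of_nonneg_left hhHc (by positivity)
      linarith
    set Q : ℝ := t - 7356/10000 * Hc with hQdef
    have hQ1 : Q ≤ 1 := by rw [hQdef]; nlinarith [hHc0]
    have hQ0 : (0 : ℝ) ≤ Q := by rw [hQdef, hHcdef]; nlinarith
    have he : Real.exp (G t) ≤ Real.exp Q := Real.exp_le_exp.mpr hGQ
    have hu := exp_upper4 hQ0 hQ1
    have hmul : G t * (t + 1) ≤ Q * (t + 1) :=
      mul_le_mul_of_nonneg_right hGQ (by linarith)
    have hfin : 1 + Q + Q ^ 2 / 2 + Q ^ 3 / 6 + 5 / 96 * Q ^ 4 + Q * (t + 1) < 2 * (t + 1) := by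
      rw [hQdef, hHcdef]
      nlinarith [sq_nonneg (t - 3/4), sq_nonneg (1 - t), mul_nonneg (by linarith : (0:ℝ) ≤ t - 3/4) (by linarith : (0:ℝ) ≤ 1 - t), sq_nonneg ((t-3/4)*(1-t)), mul_nonneg (mul_nonneg (by linarith : (0:ℝ) ≤ t - 3/4) (by linarith : (0:ℝ) ≤ t - 3/4)) (by linarith : (0:ℝ) ≤ 1 - t)]
    clear_value Q Hc
    linarith [he, hu, hmul, hfin]
end

section
/- Let n ≥ 3 be a natural number and 2 ≤ p < n real, and let λ be a real number with 0 < λ ≤ (1/n)(1 - I) for some I ∈ (0,1) satisfying (1 - I)^p < ((n-1) I + 1)^{p-1} / κ^{p-1}, where κ = n^{-1/(p-1)} (p-1). Then λ (n-1) + λ^{p/(p-1)} (p-1) < 1. -/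
theorem stmt_9 (n : ℕ) (hn : 3 ≤ n) (p lam I κ : ℝ)
    (hp2 : 2 ≤ p) (hpn : p < n)
    (hκ : κ = (n : ℝ) ^ (-(1 / (p - 1))) * (p - 1))
    (hI0 : 0 < I) (hI1 : I < 1)
    (hlam0 : 0 < lam) (hlam : lam ≤ (1 / n) * (1 - I))
    (hkey : (1 - I) ^ p < ((n - 1) * I + 1) ^ (p - 1) / κ ^ (p - 1)) :
    lam * ((n : ℝ) - 1) + lam ^ (p / (p - 1)) * (p - 1) < 1 := by
  have hn3 : (3:ℝ) ≤ n := by exact_mod_cast hn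
  have hnpos : (0:ℝ) < n := by linarith
  have hp1 : (0:ℝ) < p - 1 := by linarith
  have hA : (0:ℝ) < 1 - I := by linarith
  have hB : (0:ℝ) < (n - 1) * I + 1 := by nlinarith
  have hNpos : (0:ℝ) < (n:ℝ) ^ (1/(p-1)) := Real.rpow_pos_of_pos hnpos _
  have hκval : κ = (p - 1) / (n:ℝ) ^ (1/(p-1)) := by
    rw [hκ, Real.rpow_neg hnpos.le]
    field_simp
  have hκpos : 0 < κ := by rw [hκval]; positivity
  set q := p / (p - 1) with hq
  have hqpos : 0 < q := by positivity
  -- Step 1: κ * (1-I)^q < (n-1)*I + 1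
  have hstep1 : κ * (1 - I) ^ q < (n - 1) * I + 1 := by
    have h1 := Real.rpow_lt_rpow (by positivity) hkey (by positivity : (0:ℝ) < 1/(p-1))
    rw [← Real.rpow_mul hA.le, ← Real.div_rpow hB.le hκpos.le,
      ← Real.rpow_mul (by positivity), mul_one_div, mul_one_div,
      div_self hp1.ne', Real.rpow_one] at h1
    rw [← hq] at h1
    calc κ * (1 - I) ^ q < κ * (((n-1)*I+1)/κ) := by
          exact mul_lt_mul_of_pos_left h1 hκpos
      _ = (n - 1) * I + 1 := by field_simp
  -- monotonicity in lam
  set μ := (1/(n:ℝ)) * (1 - I) with hμ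
  have hμpos : 0 < μ := by positivity
  have hmono : lam ^ q ≤ μ ^ q := Real.rpow_le_rpow hlam0.le hlam hqpos.le
  -- compute μ ^ q
  have hq1 : q = 1 + 1/(p - 1) := by rw [hq]; field_simp; ring
  have hnq : (n:ℝ) ^ q = n * (n:ℝ) ^ (1/(p-1)) := by
    rw [hq1, Real.rpow_add hnpos, Real.rpow_one]
  have hμq : μ ^ q = (1 - I) ^ q / ((n:ℝ) * (n:ℝ) ^ (1/(p-1))) := by
    rw [hμ, one_div, ← div_eq_inv_mul, Real.div_rpow hA.le hnpos.le, hnq]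
  -- final estimate
  have hfin : μ * ((n:ℝ) - 1) + μ ^ q * (p - 1) < 1 := by
    rw [hμq, hμ]
    set N := (n:ℝ) ^ (1/(p-1)) with hN
    set X := (1 - I) ^ q with hX
    have hXpos : 0 < X := Real.rpow_pos_of_pos hA _
    have h1 : (p - 1) * X < ((n - 1) * I + 1) * N := by
      have h := hstep1
      rw [hκval, div_mul_eq_mul_div, div_lt_iff₀ hNpos] at h
      linarith
    have hgoal : (1/(n:ℝ)*(1-I)*((n:ℝ)-1) + X/((n:ℝ)*N)*(p-1)) * ((n:ℝ)*N)
        < 1 * ((n:ℝ)*N) := by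
      have e : (1/(n:ℝ)*(1-I)*((n:ℝ)-1) + X/((n:ℝ)*N)*(p-1)) * ((n:ℝ)*N)
          = (1-I)*((n:ℝ)-1)*N + (p-1)*X := by
        field_simp
      rw [e, one_mul]
      have e2 : (1-I)*((n:ℝ)-1)*N + (((n:ℝ)-1)*I+1)*N = (n:ℝ)*N := by ring
      linarith
    exact lt_of_mul_lt_mul_right hgoal (by positivity)
  calc lam * ((n:ℝ) - 1) + lam ^ q * (p - 1)
      ≤ μ * ((n:ℝ) - 1) + μ ^ q * (p - 1) := by
        have h1 : lam * ((n:ℝ)-1) ≤ μ * ((n:ℝ)-1) := by nlinarith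
        have h2 : lam ^ q * (p-1) ≤ μ ^ q * (p-1) := by nlinarith
        linarith
    _ < 1 := hfin
end
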